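/- For x, y ∈ Δ^{n+1} (n ≥ 2): x ⊑ y if and only if for every i with xᵢ < 1 and yᵢ < 1, pᵢ(x) ⊑ pᵢ(y) in Δⁿ, where pᵢ is the i-th Bayesian projection. -/

import Mathlib

open Finset

/-- Δⁿ: probability distributions on {1,…,n}. -/
def IsDist {n : ℕ} (x : Fin n → ℝ) : Prop :=
  (∀ i, 0 ≤ x i) ∧ ∑ i, x i = 1

/-- The adjacent-index inequalities  xᵢ yᵢ₊₁ ≤ xᵢ₊₁ yᵢ  for all i ∈ {1,…,n-1}. -/
def AdjLE {n : ℕ} (x y : Fin n → ℝ) : Prop :=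
  ∀ i : ℕ, ∀ h : i + 1 < n,
    x ⟨i, Nat.lt_of_succ_lt h⟩ * y ⟨i + 1, h⟩ ≤ x ⟨i + 1, h⟩ * y ⟨i, Nat.lt_of_succ_lt h⟩

/-- The Bayesian order on Δⁿ: x ⊑ y iff some permutation σ monotonizes both
(x∘σ, y∘σ decreasing, i.e. in Λⁿ) and the adjacent inequalities hold. -/
def BayesLE {n : ℕ} (x y : Fin n → ℝ) : Prop :=
  ∃ σ : Equiv.Perm (Fin n),
    Antitone (x ∘ σ) ∧ Antitone (y ∘ σ) ∧ AdjLE (x ∘ σ) (y ∘ σ)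

/-- The i-th Bayesian projection pᵢ : Δ^{n+1} → Δⁿ. -/
noncomputable def bproj {n : ℕ} (i : Fin (n + 1)) (x : Fin (n + 1) → ℝ) : Fin n → ℝ :=
  fun j => (1 - x i)⁻¹ * x (i.succAbove j)

/-- Pairwise condition: a dominates b. -/
def PGE {n : ℕ} (x y : Fin n → ℝ) (a b : Fin n) : Prop :=
  x b ≤ x a ∧ y b ≤ y a ∧ x a * y b ≤ x b * y a

lemma chain {n : ℕ} {u v : Fin n → ℝ} (hu : Antitone u) (hv : Antitone v)
    (hu0 : ∀ i, 0 ≤ u i) (hv0 : ∀ i, 0 ≤ v i) (hadj : AdjLE u v) :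
    ∀ d : ℕ, ∀ k l : Fin n, (l : ℕ) = (k : ℕ) + d → u k * v l ≤ u l * v k := by
  intro d
  induction d with
  | zero =>
    intro k l h
    have : k = l := Fin.ext (by omega)
    subst this; exact le_refl _
  | succ d ih =>
    intro k l h
    have hln : (l : ℕ) < n := l.isLt
    have hmlt : (k : ℕ) + d + 1 < n := by omega
    set m : Fin n := ⟨(k : ℕ) + d, Nat.lt_of_succ_lt hmlt⟩ with hm
    have h1 : u k * v m ≤ u m * v k := ih k m rfl
    have hleq : l = ⟨(k : ℕ) + d + 1, hmlt⟩ := Fin.ext (by simp only [Fin.val_mk]; omega)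
    have h2 : u m * v l ≤ u l * v m := by rw [hleq]; exact hadj ((k : ℕ) + d) hmlt
    have hml : m ≤ l := by rw [hleq]; exact Fin.mk_le_mk.2 (by omega)
    rcases eq_or_lt_of_le (hu0 m) with hum | hum
    · -- u m = 0
      have hul : u l = 0 := le_antisymm (by linarith [hu hml]) (hu0 l)
      have hz : u k * v m ≤ 0 := by nlinarith [h1, hv0 k]
      have hz' : u k * v m = 0 := le_antisymm hz (mul_nonneg (hu0 k) (hv0 m))
      rcases mul_eq_zero.1 hz' with h | h
      · rw [h, hul]; simp
      · have hvl : v l = 0 := le_antisymm (by rw [← h]; exact hv hml) (hv0 l)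
        rw [hvl, hul]; simp
    · rcases eq_or_lt_of_le (hv0 m) with hvm | hvm
      · have hvl : v l = 0 := le_antisymm (by linarith [hv hml]) (hv0 l)
        rw [hvl]
        have := mul_nonneg (hu0 l) (hv0 k)
        nlinarith [hu0 k]
      · have h4 := mul_le_mul h1 h2 (mul_nonneg (hu0 m) (hv0 l))
          (mul_nonneg (hu0 m) (hv0 k))
        have h5 : (u m * v m) * (u k * v l) ≤ (u m * v m) * (u l * v k) := by
          nlinarith [h4]
        exact le_of_mul_le_mul_left h5 (mul_pos hum hvm)

lemma bayesLE_iff_pair {n : ℕ} {x y : Fin n → ℝ}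
    (hx0 : ∀ i, 0 ≤ x i) (hy0 : ∀ i, 0 ≤ y i) :
    BayesLE x y ↔ ∀ a b : Fin n, PGE x y a b ∨ PGE x y b a := by
  constructor
  · rintro ⟨σ, hux, huy, hadj⟩ a b
    have key : ∀ k l : Fin n, k ≤ l → PGE x y (σ k) (σ l) := by
      intro k l hkl
      have hc := chain hux huy (fun i => hx0 _) (fun i => hy0 _) hadj
        ((l : ℕ) - (k : ℕ)) k l (by omega)
      exact ⟨hux hkl, huy hkl, hc⟩
    rcases le_total (σ.symm a) (σ.symm b) with h | h
    · have := key _ _ h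
      simp only [Equiv.apply_symm_apply] at this
      exact Or.inl this
    · have := key _ _ h
      simp only [Equiv.apply_symm_apply] at this
      exact Or.inr this
  · intro H
    have hmono := Tuple.monotone_sort (fun j => toLex (-(x j), -(y j)) : Fin n → ℝ ×ₗ ℝ)
    set σ := Tuple.sort (fun j => toLex (-(x j), -(y j)) : Fin n → ℝ ×ₗ ℝ) with hσ
    have hlex : ∀ k l : Fin n, k ≤ l →
        (-(x (σ k)) < -(x (σ l)) ∨ (-(x (σ k)) = -(x (σ l)) ∧ -(y (σ k)) ≤ -(y (σ l)))) := by
      intro k l hkl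
      have := hmono hkl
      simpa [Prod.Lex.le_iff] using this
    have hax : Antitone (x ∘ σ) := by
      intro k l hkl
      rcases hlex k l hkl with h | ⟨h1, h2⟩
      · simp only [Function.comp]; linarith
      · simp only [Function.comp]; linarith
    have hay : Antitone (y ∘ σ) := by
      intro k l hkl
      rcases hlex k l hkl with h | ⟨h1, h2⟩
      · rcases H (σ k) (σ l) with ⟨h3, h4, h5⟩ | ⟨h3, h4, h5⟩
        · simpa using h4
        · simp only [Function.comp]; linarith
      · simp only [Function.comp]; linarith
    refine ⟨σ, hax, hay, ?_⟩
    intro i hi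
    have hle : (⟨i, Nat.lt_of_succ_lt hi⟩ : Fin n) ≤ ⟨i + 1, hi⟩ := Fin.mk_le_mk.2 (Nat.le_succ i)
    have hxx : x (σ ⟨i + 1, hi⟩) ≤ x (σ ⟨i, Nat.lt_of_succ_lt hi⟩) := hax hle
    have hyy : y (σ ⟨i + 1, hi⟩) ≤ y (σ ⟨i, Nat.lt_of_succ_lt hi⟩) := hay hle
    rcases H (σ ⟨i, Nat.lt_of_succ_lt hi⟩) (σ ⟨i + 1, hi⟩) with ⟨_, _, h3⟩ | ⟨h1, h2, _⟩
    · exact h3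
    · have e1 : x (σ ⟨i, Nat.lt_of_succ_lt hi⟩) = x (σ ⟨i + 1, hi⟩) := le_antisymm h1 hxx
      have e2 : y (σ ⟨i, Nat.lt_of_succ_lt hi⟩) = y (σ ⟨i + 1, hi⟩) := le_antisymm h2 hyy
      simp only [Function.comp, e1, e2, le_refl]

lemma bproj_nonneg {n : ℕ} {i : Fin (n + 1)} {x : Fin (n + 1) → ℝ}
    (hxi : x i < 1) (hx0 : ∀ j, 0 ≤ x j) : ∀ j, 0 ≤ bproj i x j := fun j =>
  mul_nonneg (inv_nonneg.2 (by linarith)) (hx0 _)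

lemma scale_PGE {n : ℕ} (i : Fin (n + 1)) {x y : Fin (n + 1) → ℝ}
    (hxi : x i < 1) (hyi : y i < 1) (a b : Fin n) :
    PGE (bproj i x) (bproj i y) a b ↔ PGE x y (i.succAbove a) (i.succAbove b) := by
  have hc : (0 : ℝ) < (1 - x i)⁻¹ := inv_pos.2 (by linarith)
  have hd : (0 : ℝ) < (1 - y i)⁻¹ := inv_pos.2 (by linarith)
  unfold PGE bproj
  refine and_congr (mul_le_mul_iff_right₀ hc) (and_congr (mul_le_mul_iff_right₀ hd) ?_)
  rw [show ((1 - x i)⁻¹ * x (i.succAbove a)) * ((1 - y i)⁻¹ * y (i.succAbove b)) =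
        ((1 - x i)⁻¹ * (1 - y i)⁻¹) * (x (i.succAbove a) * y (i.succAbove b)) by ring,
      show ((1 - x i)⁻¹ * x (i.succAbove b)) * ((1 - y i)⁻¹ * y (i.succAbove a)) =
        ((1 - x i)⁻¹ * (1 - y i)⁻¹) * (x (i.succAbove b) * y (i.succAbove a)) by ring]
  exact mul_le_mul_iff_right₀ (mul_pos hc hd)

lemma dist_zero_of_other {n : ℕ} {x : Fin n → ℝ} (hx : IsDist x) {c a : Fin n}
    (hc : x c = 1) (hac : a ≠ c) : x a = 0 := by
  have hsub : ({a, c} : Finset (Fin n)) ⊆ Finset.univ := Finset.subset_univ _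
  have hsum : ∑ j ∈ ({a, c} : Finset (Fin n)), x j ≤ ∑ j, x j :=
    Finset.sum_le_sum_of_subset_of_nonneg hsub (fun j _ _ => hx.1 j)
  rw [Finset.sum_pair hac, hx.2] at hsum
  have := hx.1 a
  linarith

lemma dist_le_one {n : ℕ} {x : Fin n → ℝ} (hx : IsDist x) (c : Fin n) : x c ≤ 1 := by
  have := Finset.single_le_sum (fun j _ => hx.1 j) (Finset.mem_univ c)
  rw [hx.2] at this; exact this

theorem stmt11 {n : ℕ} (hn : 2 ≤ n) (x y : Fin (n + 1) → ℝ)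
    (hx : IsDist x) (hy : IsDist y) :
    BayesLE x y ↔
      ∀ i : Fin (n + 1), x i < 1 → y i < 1 → BayesLE (bproj i x) (bproj i y) := by
  constructor
  · intro h i hxi hyi
    have pair := (bayesLE_iff_pair hx.1 hy.1).1 h
    refine (bayesLE_iff_pair (bproj_nonneg hxi hx.1) (bproj_nonneg hyi hy.1)).2 ?_
    intro a b
    rcases pair (i.succAbove a) (i.succAbove b) with hp | hp
    · exact Or.inl ((scale_PGE i hxi hyi a b).2 hp)
    · exact Or.inr ((scale_PGE i hxi hyi b a).2 hp)
  · intro h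
    refine (bayesLE_iff_pair hx.1 hy.1).2 ?_
    intro a b
    by_cases hab : a = b
    · subst hab; exact Or.inl ⟨le_refl _, le_refl _, le_refl _⟩
    have hcompl : (({a, b} : Finset (Fin (n + 1)))ᶜ).Nonempty := by
      rw [← Finset.card_pos, Finset.card_compl]
      have h1 : ({a, b} : Finset (Fin (n + 1))).card ≤ 2 := by
        have := Finset.card_insert_le a ({b} : Finset (Fin (n + 1)))
        simpa using this
      have h2 : Fintype.card (Fin (n + 1)) = n + 1 := Fintype.card_fin _
      omega
    obtain ⟨c, hcmem⟩ := hcompl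
    have hc : c ≠ a ∧ c ≠ b := by
      simpa [Finset.mem_compl, Finset.mem_insert, not_or] using hcmem
    rcases eq_or_lt_of_le (dist_le_one hx c) with hxc | hxc
    · -- x c = 1, so x a = x b = 0
      have ha0 : x a = 0 := dist_zero_of_other hx hxc hc.1.symm
      have hb0 : x b = 0 := dist_zero_of_other hx hxc hc.2.symm
      rcases le_total (y b) (y a) with h' | h'
      · exact Or.inl ⟨by rw [ha0, hb0], h', by rw [ha0, hb0]; simp⟩
      · exact Or.inr ⟨by rw [ha0, hb0], h', by rw [ha0, hb0]; simp⟩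
    rcases eq_or_lt_of_le (dist_le_one hy c) with hyc | hyc
    · -- y c = 1, so y a = y b = 0
      have ha0 : y a = 0 := dist_zero_of_other hy hyc hc.1.symm
      have hb0 : y b = 0 := dist_zero_of_other hy hyc hc.2.symm
      rcases le_total (x b) (x a) with h' | h'
      · exact Or.inl ⟨h', by rw [ha0, hb0], by rw [ha0, hb0]; simp⟩
      · exact Or.inr ⟨h', by rw [ha0, hb0], by rw [ha0, hb0]; simp⟩
    · have hb := h c hxc hyc
      obtain ⟨a', ha'⟩ := Fin.exists_succAbove_eq hc.1.symm
      obtain ⟨b', hb'⟩ := Fin.exists_succAbove_eq hc.2.symm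
      have pairp := (bayesLE_iff_pair (bproj_nonneg hxc hx.1) (bproj_nonneg hyc hy.1)).1 hb a' b'
      rcases pairp with hp | hp
      · have := (scale_PGE c hxc hyc a' b').1 hp
        rw [ha', hb'] at this
        exact Or.inl this
      · have := (scale_PGE c hxc hyc b' a').1 hp
        rw [ha', hb'] at this
        exact Or.inr this
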